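/- (Lemma 4.) Consider a monotonic CTM controlled by the best-effort policy, with ρ_j(t) ∈ [0, ρ̄_j], 0 ≤ q_j(t) ≤ q̄_j, and 0 ≤ w_j(t) ≤ r̄_j for all j at time t. Suppose that at cell k the queue-saturated best-effort value satisfies 0 ≤ [ (l_k/Δt)(ρ_k^c − ρ_k(t)) + φ_k(t)/β̄_k − φ_{k−1}(t) ] saturated to the interval [ (q_k(t) − q̄_k)/Δt + w_k(t), q_k(t)/Δt + w_k(t) ] ≤ r̄_k, i.e., the best-effort rate at cell k is not affected by the constant metering bounds 0 ≤ r ≤ r̄_k. Then, with r*_j(t) applied at all cells, cell k is nonrestrictive at time t+1. -/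

import Mathlib

open Finset NNReal

/-- A **monotonic Cell Transmission Model** (CTM) of a freeway with `n` cells,
indexed by `k ∈ {1,…,n}` (index `0` refers to the upstream mainline boundary,
and the data attached to indices outside `{1,…,n}` is irrelevant junk).
The fields collect the parameters of the model: cell lengths `l k > 0`,
offramp split ratios `β k ∈ [0,1)`, sampling time `Δt > 0`, jam densities
`ρjam k > 0`, critical densities `ρc k ∈ (0, ρjam k)`, nondecreasing Lipschitz
demand functions `d k` (vanishing for `ρ ≤ 0` and constant on `[ρc k, ∞)`),
nonincreasing Lipschitz supply functions `s k` (constant on `(-∞, ρc k]` and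
vanishing on `[ρjam k, ∞)`), together with Assumption 1 of the paper:
`Δt·cd k ≤ l k·(1 − β k)` and `Δt·cs k ≤ l k`. -/
structure CTM (n : ℕ) where
  /-- cell lengths -/
  l : ℕ → ℝ
  /-- offramp split ratios -/
  β : ℕ → ℝ
  /-- sampling time -/
  Δt : ℝ
  /-- jam densities -/
  ρjam : ℕ → ℝ
  /-- critical densities -/
  ρc : ℕ → ℝ
  /-- demand functions of the fundamental diagram -/
  d : ℕ → ℝ → ℝ
  /-- supply functions of the fundamental diagram -/
  s : ℕ → ℝ → ℝ
  /-- Lipschitz constants of the demand functions -/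
  cd : ℕ → ℝ≥0
  /-- Lipschitz constants of the supply functions -/
  cs : ℕ → ℝ≥0
  hl : ∀ k, 0 < l k
  hβ : ∀ k, 0 ≤ β k ∧ β k < 1
  hΔt : 0 < Δt
  hρjam : ∀ k, 0 < ρjam k
  hρc : ∀ k, 0 < ρc k ∧ ρc k < ρjam k
  hd_nonneg : ∀ k x, 0 ≤ d k x
  hd_mono : ∀ k, Monotone (d k)
  hd_lip : ∀ k, LipschitzWith (cd k) (d k)
  hd_zero : ∀ k x, x ≤ 0 → d k x = 0
  hd_const : ∀ k x, ρc k ≤ x → d k x = d k (ρc k)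
  hs_nonneg : ∀ k x, 0 ≤ s k x
  hs_anti : ∀ k, Antitone (s k)
  hs_lip : ∀ k, LipschitzWith (cs k) (s k)
  hs_const : ∀ k x, x ≤ ρc k → s k x = s k (ρc k)
  hs_zero : ∀ k x, ρjam k ≤ x → s k x = 0
  /-- Assumption 1, demand part: `Δt·cd k ≤ l k·β̄ k`. -/
  assumption1_d : ∀ k, Δt * (cd k : ℝ) ≤ l k * (1 - β k)
  /-- Assumption 1, supply part: `Δt·cs k ≤ l k`. -/
  assumption1_s : ∀ k, Δt * (cs k : ℝ) ≤ l k

namespace CTM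

variable {n : ℕ}

/-- Complement `β̄ k := 1 − β k` of the split ratio. -/
def βbar (M : CTM n) (k : ℕ) : ℝ := 1 - M.β k

/-- Mainline flows as functions of the densities: `φ_0 = w_0` (external upstream
demand), `φ_k = min{d_k(ρ_k), s_{k+1}(ρ_{k+1})}` for `1 ≤ k ≤ n−1`, and
`φ_n = d_n(ρ_n)`. -/
noncomputable def flow (M : CTM n) (w0 : ℝ) (ρ : ℕ → ℝ) (k : ℕ) : ℝ :=
  if k = 0 then w0
  else if k < n then min (M.d k (ρ k)) (M.s (k + 1) (ρ (k + 1)))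
  else M.d n (ρ n)

/-- Interface capacities: `F_k = min{d_k(ρ_k^c), s_{k+1}(ρ_{k+1}^c)}` for
`k ≤ n−1` and `F_n = d_n(ρ_n^c)`. -/
noncomputable def F (M : CTM n) (k : ℕ) : ℝ :=
  if k < n then min (M.d k (M.ρc k)) (M.s (k + 1) (M.ρc (k + 1)))
  else M.d n (M.ρc n)

/-- Saturation `[x]ᵘₗ := min{u, max{x, l}}`. -/
noncomputable def sat (x lo hi : ℝ) : ℝ := min hi (max x lo)

/-- The best-effort metering rate
`r*_k = [ (l_k/Δt)(ρ_k^c − ρ_k) + φ_k/β̄_k − φ_{k−1} ]` saturated to the interval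
`[max{0, (q_k − q̄_k)/Δt + w_k}, min{r̄_k, q_k/Δt + w_k}]`. -/
noncomputable def beRate (M : CTM n) (w0 : ℝ) (ρ q w rbar qbar : ℕ → ℝ) (k : ℕ) : ℝ :=
  sat (M.l k / M.Δt * (M.ρc k - ρ k) + M.flow w0 ρ k / M.βbar k - M.flow w0 ρ (k - 1))
      (max 0 ((q k - qbar k) / M.Δt + w k))
      (min (rbar k) (q k / M.Δt + w k))

/-- One step of the density conservation law:
`ρ_k(t+1) = ρ_k(t) + (Δt/l_k)(φ_{k−1}(t) + r_k(t) − φ_k(t)/β̄_k)`. -/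
noncomputable def ρnext (M : CTM n) (w0 : ℝ) (ρ r : ℕ → ℝ) (k : ℕ) : ℝ :=
  ρ k + M.Δt / M.l k * (M.flow w0 ρ (k - 1) + r k - M.flow w0 ρ k / M.βbar k)

/-- Cell `k` is **restrictive** (Definition 1) if either (i) the onramp is not
full and the inflow is limited by non-maximal supply, or (ii) the onramp is
nonempty and the outflow is limited by non-maximal demand. -/
noncomputable def Restrictive (M : CTM n) (w0 : ℝ) (ρ q qbar : ℕ → ℝ) (k : ℕ) : Prop :=
  (q k < qbar k ∧ M.flow w0 ρ (k - 1) = M.s k (ρ k) ∧ M.s k (ρ k) < M.F (k - 1)) ∨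
  (0 < q k ∧ M.flow w0 ρ k = M.d k (ρ k) ∧ M.d k (ρ k) < M.F k)

/-- Densities recovered from the cumulative state of the CCTM:
`ρ_k = (Φ_{k−1} − Φ_k/β̄_k + R_k)/l_k`. -/
noncomputable def ρof (M : CTM n) (Φ R : ℕ → ℝ) (k : ℕ) : ℝ :=
  (Φ (k - 1) - Φ k / M.βbar k + R k) / M.l k

/-- The CCTM update maps `f_k(Φ, R) := Φ_k + Δt·φ_k`. -/
noncomputable def f (M : CTM n) (w0 : ℝ) (Φ R : ℕ → ℝ) (k : ℕ) : ℝ :=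
  Φ k + M.Δt * M.flow w0 (M.ρof Φ R) k

/-- `Traj M w ρ q r` states that the densities `ρ`, queues `q` obey the CTM
conservation laws under the metering rates `r` and external demands `w`
(`w t 0` is the upstream mainline demand, `w t k` the onramp demand at cell `k`). -/
noncomputable def Traj (M : CTM n) (w : ℕ → ℕ → ℝ) (ρ q r : ℕ → ℕ → ℝ) : Prop :=
  ∀ t k, 1 ≤ k → k ≤ n →
    ρ (t + 1) k = M.ρnext (w t 0) (ρ t) (r t) k ∧
    q (t + 1) k = q t k + M.Δt * (w t k - r t k)

/-- Total Time Spent `TTS = Δt · Σ_{t=0}^{T} Σ_{k=1}^{n} (l_k ρ_k(t) + q_k(t))`. -/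
noncomputable def TTS (M : CTM n) (T : ℕ) (ρ q : ℕ → ℕ → ℝ) : ℝ :=
  M.Δt * ∑ t ∈ Finset.range (T + 1), ∑ k ∈ Finset.Icc 1 n, (M.l k * ρ t k + q t k)

end CTM


lemma sat_unsat (x lo hi rb : ℝ) (hlohi : lo ≤ hi) (h0 : 0 ≤ CTM.sat x lo hi)
    (hr : CTM.sat x lo hi ≤ rb) :
    CTM.sat x (max 0 lo) (min rb hi) = CTM.sat x lo hi := by
  unfold CTM.sat at *
  rcases le_or_gt 0 (max x lo) with h | h
  · rw [max_left_comm, max_eq_right h, min_assoc, min_eq_right hr]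
  · exfalso
    have := min_le_right hi (max x lo)
    linarith

lemma sat_lt_self (x lo hi : ℝ) (h : CTM.sat x lo hi < x) : CTM.sat x lo hi = hi := by
  unfold CTM.sat at *
  rcases le_total hi (max x lo) with h' | h'
  · exact min_eq_left h'
  · exfalso
    rw [min_eq_right h'] at h
    exact absurd (le_max_left x lo) (not_le.mpr h)

lemma self_lt_sat (x lo hi : ℝ) (hlohi : lo ≤ hi) (h : x < CTM.sat x lo hi) :
    CTM.sat x lo hi = lo := by
  unfold CTM.sat at *
  rcases le_total x lo with h1 | h1
  · rw [max_eq_right h1, min_eq_right hlohi]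
  · exfalso
    rw [max_eq_left h1] at h
    have := min_le_right hi x
    linarith

/-- **Lemma 4.**  Consider a monotonic CTM controlled by the best-effort policy,
with `ρ_j(t) ∈ [0, ρ̄_j]`, `q_j(t) ∈ [0, q̄_j]`, and `0 ≤ w_j(t) ≤ r̄_j` for all `j`
at time `t`.  Suppose that at cell `k` the queue-saturated best-effort value
satisfies
`0 ≤ [ (l_k/Δt)(ρ_k^c − ρ_k(t)) + φ_k(t)/β̄_k − φ_{k−1}(t) ]` saturated to
`[(q_k(t) − q̄_k)/Δt + w_k(t), q_k(t)/Δt + w_k(t)] ≤ r̄_k`, i.e. the best-effort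
rate at cell `k` is not affected by the constant metering bounds `0 ≤ r ≤ r̄_k`.
Then, with the best-effort rates applied at all cells (and arbitrary next-step
upstream demand `w0next`), cell `k` is nonrestrictive at time `t+1`. -/
theorem beRate_gives_nonrestrictive {n : ℕ} (M : CTM n) (w0 w0next : ℝ)
    (ρ q w rbar qbar : ℕ → ℝ)
    (hρ : ∀ j, 1 ≤ j → j ≤ n → ρ j ∈ Set.Icc 0 (M.ρjam j))
    (hq : ∀ j, 1 ≤ j → j ≤ n → q j ∈ Set.Icc 0 (qbar j))
    (hw : ∀ j, 1 ≤ j → j ≤ n → w j ∈ Set.Icc 0 (rbar j))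
    (hrbar : ∀ j, 0 ≤ rbar j) (hqbar : ∀ j, 0 ≤ qbar j)
    (k : ℕ) (hk1 : 1 ≤ k) (hkn : k ≤ n)
    (hunsat_lo : 0 ≤ CTM.sat
        (M.l k / M.Δt * (M.ρc k - ρ k) + M.flow w0 ρ k / M.βbar k - M.flow w0 ρ (k - 1))
        ((q k - qbar k) / M.Δt + w k) (q k / M.Δt + w k))
    (hunsat_hi : CTM.sat
        (M.l k / M.Δt * (M.ρc k - ρ k) + M.flow w0 ρ k / M.βbar k - M.flow w0 ρ (k - 1))
        ((q k - qbar k) / M.Δt + w k) (q k / M.Δt + w k) ≤ rbar k) :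
    ¬ M.Restrictive w0next
        (M.ρnext w0 ρ (M.beRate w0 ρ q w rbar qbar))
        (fun j => q j + M.Δt * (w j - M.beRate w0 ρ q w rbar qbar j))
        qbar k := by
  intro hres
  have hΔt := M.hΔt
  have hl := M.hl k
  set X := M.l k / M.Δt * (M.ρc k - ρ k) + M.flow w0 ρ k / M.βbar k - M.flow w0 ρ (k - 1)
    with hX
  set lo := (q k - qbar k) / M.Δt + w k with hlo
  set hi := q k / M.Δt + w k with hhi
  set v := CTM.sat X lo hi with hv
  have hlohi : lo ≤ hi := by
    rw [hlo, hhi]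
    have h1 : (q k - qbar k) / M.Δt ≤ q k / M.Δt := by
      exact (div_le_div_iff_of_pos_right hΔt).mpr (by linarith [hqbar k])
    linarith
  have hbe : M.beRate w0 ρ q w rbar qbar k = v := by
    unfold CTM.beRate
    rw [← hX, ← hlo, ← hhi]
    exact sat_unsat X lo hi (rbar k) hlohi hunsat_lo hunsat_hi
  have hρ' : M.ρnext w0 ρ (M.beRate w0 ρ q w rbar qbar) k
      = M.ρc k + M.Δt / M.l k * (v - X) := by
    unfold CTM.ρnext
    rw [hbe, hX]
    field_simp
    ring
  simp only [CTM.Restrictive] at hres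
  rcases hres with ⟨h1, _, h3⟩ | ⟨h1, _, h3⟩
  · -- case (i)
    rcases le_or_gt v X with hvx | hvx
    · -- v ≤ X : density at most critical, supply is maximal
      have hle : M.ρc k + M.Δt / M.l k * (v - X) ≤ M.ρc k := by
        have : M.Δt / M.l k * (v - X) ≤ 0 :=
          mul_nonpos_of_nonneg_of_nonpos (le_of_lt (div_pos hΔt hl)) (by linarith)
        linarith
      have hseq : M.s k (M.ρc k + M.Δt / M.l k * (v - X)) = M.s k (M.ρc k) :=
        M.hs_const k _ hle
      have hk1n : k - 1 < n := lt_of_lt_of_le (Nat.sub_lt hk1 one_pos) hkn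
      have hF : M.F (k - 1) ≤ M.s k (M.ρc k) := by
        unfold CTM.F
        rw [if_pos hk1n, Nat.sub_add_cancel hk1]
        exact min_le_right _ _
      rw [hρ', hseq] at h3
      linarith
    · -- X < v : the rate is saturated below, queue fills to qbar
      have hvlo : v = lo := self_lt_sat X lo hi hlohi hvx
      rw [hbe, hvlo, hlo] at h1
      have hq'eq : q k + M.Δt * (w k - ((q k - qbar k) / M.Δt + w k)) = qbar k := by
        field_simp
        ring
      linarith
  · -- case (ii)
    rcases le_or_gt X v with hvx | hvx
    · -- X ≤ v : density at least critical, demand is maximal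
      have hle : M.ρc k ≤ M.ρc k + M.Δt / M.l k * (v - X) := by
        have : 0 ≤ M.Δt / M.l k * (v - X) :=
          mul_nonneg (le_of_lt (div_pos hΔt hl)) (by linarith)
        linarith
      have hdeq : M.d k (M.ρc k + M.Δt / M.l k * (v - X)) = M.d k (M.ρc k) :=
        M.hd_const k _ hle
      have hF : M.F k ≤ M.d k (M.ρc k) := by
        unfold CTM.F
        by_cases hkn' : k < n
        · rw [if_pos hkn']
          exact min_le_left _ _
        · have hkeq : k = n := le_antisymm hkn (not_lt.mp hkn')
          rw [if_neg hkn', hkeq]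
      rw [hρ', hdeq] at h3
      linarith
    · -- v < X : the rate is saturated above, queue empties
      have hvhi : v = hi := sat_lt_self X lo hi hvx
      rw [hbe, hvhi, hhi] at h1
      have hq'eq : q k + M.Δt * (w k - (q k / M.Δt + w k)) = 0 := by
        field_simp
        ring
      linarith
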